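/- arXiv:2003.05211 — 2 statements merged into one kernel-verified Lean document; each statement's English description precedes it below -/
import Mathlib

section
/- Under the perturbation setup (F Morse-non-degenerate, |G − F| ≤ η ≤ η⋄, θ_i(p̂) the continued critical points), for every real p̂ ∈ D̂, the function θ ↦ G(θ,p̂) has no critical points other than θ₁(p̂), …, θ_{2N}(p̂): if θ♯ ∈ (θ_{2N}(p̂) − 2π, θ_{2N}(p̂)] satisfies ∂_θ G(θ♯, p̂) = 0, then θ♯ = θ_i(p̂) for some i ∈ {1,…,2N}. -/
noncomputable section

open Complex Set

/-- The complex strip of half-width `s` (a fundamental domain of the complexified torus `𝕋_s`). -/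
def Strip (s : ℝ) : Set ℂ := {z : ℂ | |z.im| < s}

/-- Complex `ρ`-neighborhood of the closed real interval `[a,b]`. -/
def IccNbhd (a b ρ : ℝ) : Set ℂ :=
  {z : ℂ | ∃ y : ℝ, y ∈ Set.Icc a b ∧ ‖z - (y : ℂ)‖ < ρ}

/-- Complex `ρ`-neighborhood of the open real interval `(a,b)`. -/
def IooNbhd (a b ρ : ℝ) : Set ℂ :=
  {z : ℂ | ∃ y : ℝ, y ∈ Set.Ioo a b ∧ ‖z - (y : ℂ)‖ < ρ}

/-- Embedding of real parameter space into complex parameter space. -/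
def cemb {m : ℕ} (y : EuclideanSpace ℝ (Fin m)) : EuclideanSpace ℂ (Fin m) :=
  WithLp.toLp 2 (fun i => (y i : ℂ))

/-- Complex `r`-neighborhood of a real set `D̂ ⊆ ℝ^m` inside `ℂ^m`. -/
def DNbhd {m : ℕ} (D : Set (EuclideanSpace ℝ (Fin m))) (r : ℝ) :
    Set (EuclideanSpace ℂ (Fin m)) :=
  {z | ∃ y ∈ D, ‖z - cemb y‖ < r}

/-- Data of a `(M,β,s₀)`-Morse-non-degenerate `2π`-periodic real-analytic function, together with
its `2N` non-degenerate critical points `θ 1 < … < θ (2N) = π` in `(-π,π]` (and `θ 0 = -π`,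
the translate of the global maximum `θ (2N) = π`); odd indices are minima, even indices maxima,
and the critical values are pairwise separated by at least `β`. -/
structure MorseData (M β s₀ : ℝ) (N : ℕ) where
  F : ℂ → ℂ
  θ : ℕ → ℝ
  hol : DifferentiableOn ℂ F (Strip s₀)
  per : ∀ z : ℂ, F (z + 2 * Real.pi) = F z
  realF : ∀ x : ℝ, (F (x : ℂ)).im = 0
  bdd : ∀ z ∈ Strip s₀, ‖F z‖ ≤ M
  lower : ∀ x : ℝ, β ≤ ‖deriv F (x : ℂ)‖ + ‖iteratedDeriv 2 F (x : ℂ)‖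
  mono : ∀ i j : ℕ, i < j → j ≤ 2 * N → θ i < θ j
  first : θ 0 = -Real.pi
  last : θ (2 * N) = Real.pi
  crit : ∀ i ≤ 2 * N, deriv F ((θ i : ℝ) : ℂ) = 0
  conv : ∀ i ≤ 2 * N, i % 2 = 1 → 0 < (iteratedDeriv 2 F ((θ i : ℝ) : ℂ)).re
  conc : ∀ i ≤ 2 * N, i % 2 = 0 → (iteratedDeriv 2 F ((θ i : ℝ) : ℂ)).re < 0
  sep : ∀ i j : ℕ, 1 ≤ i → i ≤ 2 * N → 1 ≤ j → j ≤ 2 * N → i ≠ j →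
    β ≤ ‖F ((θ i : ℝ) : ℂ) - F ((θ j : ℝ) : ℂ)‖
  onlycrit : ∀ x : ℝ, -Real.pi < x → x ≤ Real.pi → deriv F ((x : ℝ) : ℂ) = 0 →
    ∃ i, i ≤ 2 * N ∧ x = θ i

/-- The threshold `η⋄ = η⋄(M,β,s₀,r₀)` of formula (4.3) in the paper. -/
def etaDiamond (M β s₀ r₀ : ℝ) : ℝ :=
  β ^ 9 * s₀ ^ 15 / (2 ^ 120 * M ^ 9) *
    min (min (r₀ ^ 2) (r₀ ^ 3 / Real.sqrt M)) (β ^ 45 * s₀ ^ 75 / (2 ^ 321 * M ^ 44))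

section AuxLemmas
open Filter


lemma isOpen_strip (s : ℝ) : IsOpen (Strip s) :=
  isOpen_lt (continuous_im.abs) continuous_const

lemma real_mem_strip {s : ℝ} (hs : 0 < s) (x : ℝ) : (x : ℂ) ∈ Strip s := by
  simp [Strip, hs]

lemma abs_eq_abs_re {z : ℂ} (hz : z.im = 0) : ‖z‖ = |z.re| := by
  rw [Complex.norm_def, Complex.normSq_apply, hz]
  rw [show z.re * z.re + 0 * 0 = z.re ^ 2 by ring, Real.sqrt_sq_eq_abs]

/-- Trace derivative: real part of a holomorphic function along the reals. -/
lemma hasDerivAt_trace {φ : ℂ → ℂ} {x : ℝ} (hφ : DifferentiableAt ℂ φ (x : ℂ)) :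
    HasDerivAt (fun t : ℝ => (φ (t : ℂ)).re) ((deriv φ (x : ℂ)).re) x := by
  have h1 : HasDerivAt (fun t : ℝ => φ (t : ℂ)) (deriv φ (x : ℂ)) x :=
    hφ.hasDerivAt.comp_ofReal
  exact (Complex.reCLM.hasFDerivAt.comp_hasDerivAt x h1 :)

lemma im_deriv_zero {φ : ℂ → ℂ} {x : ℝ} (hφ : DifferentiableAt ℂ φ (x : ℂ))
    (hre : ∀ t : ℝ, (φ (t : ℂ)).im = 0) : (deriv φ (x : ℂ)).im = 0 := by
  have h1 : HasDerivAt (fun t : ℝ => φ (t : ℂ)) (deriv φ (x : ℂ)) x :=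
    hφ.hasDerivAt.comp_ofReal
  have h2 : HasDerivAt (fun t : ℝ => (φ (t : ℂ)).im) ((deriv φ (x : ℂ)).im) x :=
    (Complex.imCLM.hasFDerivAt.comp_hasDerivAt x h1 :)
  have h3 : (fun t : ℝ => (φ (t : ℂ)).im) = fun _ => (0 : ℝ) := funext hre
  rw [h3] at h2
  exact (h2.unique (hasDerivAt_const x 0))

/-- Cauchy estimate for the derivative from a bound on a closed ball inside the domain. -/
lemma deriv_bound_ball {φ : ℂ → ℂ} {s : Set ℂ} (ho : IsOpen s)
    (hφ : DifferentiableOn ℂ φ s) {z : ℂ} {r C : ℝ} (hr : 0 < r)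
    (hsub : Metric.closedBall z r ⊆ s)
    (hC : ∀ w ∈ Metric.closedBall z r, ‖φ w‖ ≤ C) :
    ‖deriv φ z‖ ≤ C / r := by
  have hball : Metric.ball z r ⊆ s := Metric.ball_subset_closedBall.trans hsub
  have hd : DiffContOnCl ℂ φ (Metric.ball z r) := by
    refine ⟨hφ.mono hball, ?_⟩
    rw [closure_ball z hr.ne']
    exact (hφ.continuousOn).mono hsub
  have := Complex.norm_deriv_le_of_forall_mem_sphere_norm_le hr hd
    (fun w hw => by
      exact hC w (Metric.sphere_subset_closedBall hw))
  simpa using this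

lemma closedBall_subset_strip {s₀ a r : ℝ} {z : ℂ} (hz : |z.im| ≤ a) (h : a + r < s₀) :
    Metric.closedBall z r ⊆ Strip s₀ := by
  intro w hw
  have h1 : |w.im - z.im| ≤ r := by
    have := Complex.abs_im_le_norm (w - z)
    simp only [Complex.sub_im] at this
    calc |w.im - z.im| ≤ ‖w - z‖ := this
    _ ≤ r := by simpa [Complex.dist_eq] using hw
  have : |w.im| ≤ a + r := by
    calc |w.im| ≤ |z.im| + |w.im - z.im| := by
          have h2 := abs_add_le z.im (w.im - z.im); simpa using h2
    _ ≤ a + r := add_le_add hz h1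
  exact lt_of_le_of_lt this h

/-- Cauchy estimate on a sub-strip. -/
lemma strip_deriv_bound {φ : ℂ → ℂ} {s₀ C a r : ℝ} (hφ : DifferentiableOn ℂ φ (Strip s₀))
    (hr : 0 < r) (hlt : a + r < s₀)
    (hbd : ∀ w : ℂ, |w.im| ≤ a + r → ‖φ w‖ ≤ C) :
    ∀ z : ℂ, |z.im| ≤ a → ‖deriv φ z‖ ≤ C / r := by
  intro z hz
  refine deriv_bound_ball (isOpen_strip s₀) hφ hr (closedBall_subset_strip hz hlt) ?_
  intro w hw
  refine hbd w ?_
  have h1 : |w.im - z.im| ≤ r := by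
    have := Complex.abs_im_le_norm (w - z)
    simp only [Complex.sub_im] at this
    calc |w.im - z.im| ≤ ‖w - z‖ := this
    _ ≤ r := by simpa [Complex.dist_eq] using hw
  calc |w.im| ≤ |z.im| + |w.im - z.im| := by
        have := abs_add_le z.im (w.im - z.im); simpa using this
  _ ≤ a + r := add_le_add hz h1

/-- Lipschitz bound from a derivative bound. -/
lemma lip_bound {w u : ℝ → ℝ} {T : ℝ} (hw : ∀ t, HasDerivAt w (u t) t)
    (hT : ∀ t, |u t| ≤ T) (a b : ℝ) : |w b - w a| ≤ T * |b - a| := by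
  have := Convex.norm_image_sub_le_of_norm_hasDerivWithin_le
    (f := w) (f' := u) (C := T) (s := Set.univ)
    (fun t _ => (hw t).hasDerivWithinAt) (fun t _ => by simpa [Real.norm_eq_abs] using hT t)
    convex_univ (mem_univ a) (mem_univ b)
  simpa [Real.norm_eq_abs] using this

lemma away_core {v w u : ℝ → ℝ} {β T d x : ℝ}
    (hv : ∀ t, HasDerivAt v (w t) t) (hw : ∀ t, HasDerivAt w (u t) t)
    (hT : ∀ t, |u t| ≤ T) (hβ : 0 < β) (hd0 : 0 < d) (hdT : T * d ≤ β / 4)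
    (hwx : 3 * β / 4 ≤ w x) (hvx : |v x| < β * d / 4) :
    ∃ y, |y - x| < d ∧ v y = 0 := by
  have hT0 : 0 ≤ T := le_trans (abs_nonneg _) (hT 0)
  have hwlow : ∀ t ∈ Set.Icc (x - d) (x + d), β / 2 ≤ w t := by
    intro t ht
    have h1 : |w t - w x| ≤ T * |t - x| := lip_bound hw hT x t
    have h2 : |t - x| ≤ d := by
      rw [abs_le]; constructor <;> [linarith [ht.1]; linarith [ht.2]]
    have h3 : |w t - w x| ≤ β / 4 :=
      le_trans h1 (le_trans (mul_le_mul_of_nonneg_left h2 hT0) hdT)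
    have := (abs_le.1 h3).1
    linarith
  have hvc : Continuous v := by
    have : Differentiable ℝ v := fun t => (hv t).differentiableAt
    exact this.continuous
  -- v (x + d) > 0
  have h1 : β * d / 4 < v (x + d) := by
    obtain ⟨c, hc, hc2⟩ := exists_hasDerivAt_eq_slope v w (by linarith : x < x + d)
      (hvc.continuousOn) (fun t _ => hv t)
    have hcI : c ∈ Set.Icc (x - d) (x + d) := ⟨by linarith [hc.1], le_of_lt hc.2⟩
    have h2 : β / 2 ≤ (v (x + d) - v x) / (x + d - x) := hc2 ▸ hwlow c hcI
    have h3 : x + d - x = d := by ring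
    rw [h3] at h2
    have h4 : β / 2 * d ≤ v (x + d) - v x := (le_div_iff₀ hd0).1 h2
    have := (abs_lt.1 hvx).1
    nlinarith
  have h2 : v (x - d) < -(β * d / 4) := by
    obtain ⟨c, hc, hc2⟩ := exists_hasDerivAt_eq_slope v w (by linarith : x - d < x)
      (hvc.continuousOn) (fun t _ => hv t)
    have hcI : c ∈ Set.Icc (x - d) (x + d) := ⟨le_of_lt hc.1, by linarith [hc.2]⟩
    have h3 : β / 2 ≤ (v x - v (x - d)) / (x - (x - d)) := hc2 ▸ hwlow c hcI
    have h4 : x - (x - d) = d := by ring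
    rw [h4] at h3
    have h5 : β / 2 * d ≤ v x - v (x - d) := (le_div_iff₀ hd0).1 h3
    have := (abs_lt.1 hvx).2
    nlinarith
  have hzero : (0 : ℝ) ∈ Set.Ioo (v (x - d)) (v (x + d)) := by
    constructor
    · have : 0 < β * d / 4 := by positivity
      linarith
    · have : 0 < β * d / 4 := by positivity
      linarith
  obtain ⟨y, hy, hvy⟩ := intermediate_value_Ioo (by linarith : x - d ≤ x + d)
    hvc.continuousOn hzero
  refine ⟨y, ?_, hvy⟩
  rw [abs_lt]; constructor <;> [linarith [hy.1]; linarith [hy.2]]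

lemma away {v w u : ℝ → ℝ} {β T d : ℝ}
    (hv : ∀ t, HasDerivAt v (w t) t) (hw : ∀ t, HasDerivAt w (u t) t)
    (hT : ∀ t, |u t| ≤ T) (hβ : 0 < β)
    (hlow : ∀ t, β ≤ |v t| + |w t|)
    (hd0 : 0 < d) (hd1 : d ≤ 1) (hdT : T * d ≤ β / 4)
    {x : ℝ} (hvx : |v x| < β * d / 4) :
    ∃ y, |y - x| < d ∧ v y = 0 := by
  have hwx : 3 * β / 4 ≤ |w x| := by
    have h1 := hlow x
    have : |v x| < β / 4 := lt_of_lt_of_le hvx (by nlinarith)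
    linarith [abs_nonneg (w x)]
  rcases le_or_gt 0 (w x) with hs | hs
  · exact away_core hv hw hT hβ hd0 hdT (by rwa [_root_.abs_of_nonneg hs] at hwx) hvx
  · have h := away_core (v := fun t => -v t) (w := fun t => -w t) (u := fun t => -u t)
      (fun t => (hv t).neg) (fun t => (hw t).neg) (fun t => by simpa using hT t)
      hβ hd0 hdT (show 3 * β / 4 ≤ -w x by rw [_root_.abs_of_neg hs] at hwx; linarith)
      (show |-v x| < β * d / 4 by rwa [abs_neg])
    obtain ⟨y, hy1, hy2⟩ := h
    exact ⟨y, hy1, neg_eq_zero.1 hy2⟩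

lemma rolle_unique {v w : ℝ → ℝ} (hv : ∀ t, HasDerivAt v (w t) t)
    {l r t₁ t₂ : ℝ} (hw : ∀ t, l ≤ t → t ≤ r → w t ≠ 0)
    (h1l : l ≤ t₁) (h1r : t₁ ≤ r) (h2l : l ≤ t₂) (h2r : t₂ ≤ r)
    (hv1 : v t₁ = 0) (hv2 : v t₂ = 0) : t₁ = t₂ := by
  have hvd : Differentiable ℝ v := fun t => (hv t).differentiableAt
  have hvc : Continuous v := hvd.continuous
  by_contra hne
  have key : ∀ a b : ℝ, a < b → l ≤ a → b ≤ r → v a = 0 → v b = 0 → False := by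
    intro a b hab ha hb hva hvb
    obtain ⟨c, hc, hc2⟩ := exists_hasDerivAt_eq_zero hab hvc.continuousOn
      (hva.trans hvb.symm) (fun t _ => hv t)
    exact hw c (le_trans ha (le_of_lt hc.1)) (le_trans (le_of_lt hc.2) hb) hc2
  rcases lt_or_gt_of_ne hne with h | h
  · exact key t₁ t₂ h h1l h2r hv1 hv2
  · exact key t₂ t₁ h h2l h1r hv2 hv1

/-- Limit lemma: `c * r ^ n ≤ C` for all `r < s` gives it at `s`. -/
lemma mul_pow_le_limit {c C s : ℝ} (n : ℕ) (hs : 0 < s)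
    (h : ∀ r : ℝ, 0 < r → r < s → c * r ^ n ≤ C) : c * s ^ n ≤ C := by
  have h1 : Tendsto (fun r : ℝ => c * r ^ n) (nhdsWithin s (Set.Iio s)) (nhds (c * s ^ n)) :=
    ((continuous_const.mul (continuous_pow n)).tendsto s).mono_left nhdsWithin_le_nhds
  refine le_of_tendsto h1 ?_
  filter_upwards [Ioo_mem_nhdsLT_of_mem (⟨hs, le_refl s⟩ : s ∈ Set.Ioc 0 s)] with r hr
  exact h r hr.1 hr.2

lemma periodic_deriv {φ : ℂ → ℂ} {c : ℂ} (h : Function.Periodic φ c) :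
    Function.Periodic (deriv φ) c := by
  intro z
  rw [← deriv_comp_add_const φ c z]
  congr 1
  exact funext fun w => h w

lemma deriv_diffOn {φ : ℂ → ℂ} {s : Set ℂ} (ho : IsOpen s)
    (hφ : DifferentiableOn ℂ φ s) : DifferentiableOn ℂ (deriv φ) s :=
  ((hφ.analyticOnNhd ho).deriv).differentiableOn

lemma three_bounds {φ : ℂ → ℂ} {s₀ C : ℝ} (hs : 0 < s₀)
    (hφ : DifferentiableOn ℂ φ (Strip s₀))
    (hC : ∀ z ∈ Strip s₀, ‖φ z‖ ≤ C) :
    (∀ z : ℂ, |z.im| ≤ s₀/2 → ‖deriv φ z‖ ≤ 4*C/s₀) ∧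
    (∀ z : ℂ, |z.im| ≤ s₀/4 → ‖deriv (deriv φ) z‖ ≤ 16*C/s₀^2) ∧
    (∀ z : ℂ, |z.im| ≤ s₀/8 → ‖deriv (deriv (deriv φ)) z‖ ≤ 128*C/s₀^3) := by
  have hφ1 : DifferentiableOn ℂ (deriv φ) (Strip s₀) := deriv_diffOn (isOpen_strip s₀) hφ
  have hφ2 : DifferentiableOn ℂ (deriv (deriv φ)) (Strip s₀) :=
    deriv_diffOn (isOpen_strip s₀) hφ1
  have b1 : ∀ z : ℂ, |z.im| ≤ s₀/2 → ‖deriv φ z‖ ≤ 4*C/s₀ := by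
    have h := strip_deriv_bound (a := s₀/2) (r := s₀/4) hφ (by linarith) (by linarith)
      (fun w hw => hC w (by simp only [Strip, mem_setOf_eq]; linarith))
    intro z hz
    have := h z hz
    rwa [show C / (s₀/4) = 4*C/s₀ by field_simp] at this
  have b2 : ∀ z : ℂ, |z.im| ≤ s₀/4 → ‖deriv (deriv φ) z‖ ≤ 16*C/s₀^2 := by
    have h := strip_deriv_bound (a := s₀/4) (r := s₀/4) hφ1 (by linarith) (by linarith)
      (fun w hw => b1 w (by linarith))
    intro z hz
    have := h z hz
    rwa [show (4*C/s₀) / (s₀/4) = 16*C/s₀^2 by field_simp; ring] at this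
  have b3 : ∀ z : ℂ, |z.im| ≤ s₀/8 → ‖deriv (deriv (deriv φ)) z‖ ≤ 128*C/s₀^3 := by
    have h := strip_deriv_bound (a := s₀/8) (r := s₀/8) hφ2 (by linarith) (by linarith)
      (fun w hw => b2 w (by linarith))
    intro z hz
    have := h z hz
    rwa [show (16*C/s₀^2) / (s₀/8) = 128*C/s₀^3 by field_simp; ring] at this
  exact ⟨b1, b2, b3⟩

end AuxLemmas


lemma eta_bounds {M β s₀ r₀ η : ℝ} (hM : 0 < M) (hβ : 0 < β) (hs : 0 < s₀) (hr : 0 < r₀)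
    (hη : η ≤ etaDiamond M β s₀ r₀) (h1 : β * s₀ ≤ M) (h2 : β * s₀ ^ 2 ≤ 4 * M) :
    η ≤ β ^ 2 * s₀ ^ 4 / (2 ^ 30 * M) ∧ η ≤ β * s₀ / 2 ^ 30 ∧ η ≤ β * s₀ ^ 2 / 2 ^ 30 := by
  have hAB : η ≤ β ^ 54 * s₀ ^ 90 / (2 ^ 441 * M ^ 53) := by
    have hA : (0:ℝ) ≤ β ^ 9 * s₀ ^ 15 / (2 ^ 120 * M ^ 9) := by positivity
    have hmin : min (min (r₀ ^ 2) (r₀ ^ 3 / Real.sqrt M)) (β ^ 45 * s₀ ^ 75 / (2 ^ 321 * M ^ 44))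
        ≤ β ^ 45 * s₀ ^ 75 / (2 ^ 321 * M ^ 44) := min_le_right _ _
    calc η ≤ etaDiamond M β s₀ r₀ := hη
      _ ≤ (β ^ 9 * s₀ ^ 15 / (2 ^ 120 * M ^ 9)) * (β ^ 45 * s₀ ^ 75 / (2 ^ 321 * M ^ 44)) := by
          exact mul_le_mul_of_nonneg_left hmin hA
      _ = β ^ 54 * s₀ ^ 90 / (2 ^ 441 * M ^ 53) := by
          rw [div_mul_div_comm]; generalize (2:ℝ) = c; ring
  have hbs : 0 ≤ β * s₀ := by positivity
  have hbs2 : 0 ≤ β * s₀ ^ 2 := by positivity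
  have key1 : β ^ 52 * s₀ ^ 86 ≤ 2 ^ 68 * M ^ 52 := by
    calc β ^ 52 * s₀ ^ 86 = (β * s₀) ^ 18 * (β * s₀ ^ 2) ^ 34 := by ring
      _ ≤ M ^ 18 * (4 * M) ^ 34 := by gcongr
      _ = 2 ^ 68 * M ^ 52 := by rw [mul_pow]; norm_num; ring
  have key2 : β ^ 53 * s₀ ^ 89 ≤ 2 ^ 72 * M ^ 53 := by
    calc β ^ 53 * s₀ ^ 89 = (β * s₀) ^ 17 * (β * s₀ ^ 2) ^ 36 := by ring
      _ ≤ M ^ 17 * (4 * M) ^ 36 := by gcongr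
      _ = 2 ^ 72 * M ^ 53 := by rw [mul_pow]; norm_num; ring
  have key3 : β ^ 53 * s₀ ^ 88 ≤ 2 ^ 70 * M ^ 53 := by
    calc β ^ 53 * s₀ ^ 88 = (β * s₀) ^ 18 * (β * s₀ ^ 2) ^ 35 := by ring
      _ ≤ M ^ 18 * (4 * M) ^ 35 := by gcongr
      _ = 2 ^ 70 * M ^ 53 := by rw [mul_pow]; norm_num; ring
  refine ⟨?_, ?_, ?_⟩
  · refine le_trans hAB ?_
    rw [div_le_div_iff₀ (by positivity) (by positivity)]
    calc β ^ 54 * s₀ ^ 90 * (2 ^ 30 * M)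
        = (β ^ 52 * s₀ ^ 86) * ((β ^ 2 * s₀ ^ 4) * (2 ^ 30 * M)) := by ring
      _ ≤ (2 ^ 68 * M ^ 52) * ((β ^ 2 * s₀ ^ 4) * (2 ^ 30 * M)) := by gcongr <;> positivity
      _ = β ^ 2 * s₀ ^ 4 * (2 ^ 98 * M ^ 53) := by ring
      _ ≤ β ^ 2 * s₀ ^ 4 * (2 ^ 441 * M ^ 53) := by gcongr <;> norm_num
  · refine le_trans hAB ?_
    rw [div_le_div_iff₀ (by positivity) (by positivity)]
    calc β ^ 54 * s₀ ^ 90 * 2 ^ 30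
        = (β ^ 53 * s₀ ^ 89) * ((β * s₀) * 2 ^ 30) := by ring
      _ ≤ (2 ^ 72 * M ^ 53) * ((β * s₀) * 2 ^ 30) := by gcongr <;> positivity
      _ = β * s₀ * (2 ^ 102 * M ^ 53) := by ring
      _ ≤ β * s₀ * (2 ^ 441 * M ^ 53) := by gcongr <;> norm_num
  · refine le_trans hAB ?_
    rw [div_le_div_iff₀ (by positivity) (by positivity)]
    calc β ^ 54 * s₀ ^ 90 * 2 ^ 30
        = (β ^ 53 * s₀ ^ 88) * ((β * s₀ ^ 2) * 2 ^ 30) := by ring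
      _ ≤ (2 ^ 70 * M ^ 53) * ((β * s₀ ^ 2) * 2 ^ 30) := by gcongr <;> positivity
      _ = β * s₀ ^ 2 * (2 ^ 100 * M ^ 53) := by ring
      _ ≤ β * s₀ ^ 2 * (2 ^ 441 * M ^ 53) := by gcongr <;> norm_num

lemma num_facts {M β s₀ η : ℝ} (hM : 0 < M) (hβ : 0 < β) (hs : 0 < s₀) (hη0 : 0 ≤ η)
    (hn1 : η ≤ β ^ 2 * s₀ ^ 4 / (2 ^ 30 * M)) (hn2 : η ≤ β * s₀ / 2 ^ 30)
    (hn3 : η ≤ β * s₀ ^ 2 / 2 ^ 30) :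
    4 * η / s₀ < β * min (β * s₀ ^ 3 / (512 * M)) 1 / 4 ∧
    16 * η / s₀ ^ 2 ≤ β / 2 ∧
    2 * (2 * η / (β * s₀)) ≤ β * s₀ ^ 3 / (512 * M) ∧
    2 * η / (β * s₀) < Real.pi := by
  have hη1 : η * (2 ^ 30 * M) ≤ β ^ 2 * s₀ ^ 4 := (le_div_iff₀ (by positivity)).1 hn1
  have hη2 : η * 2 ^ 30 ≤ β * s₀ := (le_div_iff₀ (by positivity)).1 hn2
  have hη3 : η * 2 ^ 30 ≤ β * s₀ ^ 2 := (le_div_iff₀ (by positivity)).1 hn3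
  have hηM : 0 ≤ η * M := mul_nonneg hη0 hM.le
  refine ⟨?_, ?_, ?_, ?_⟩
  · rcases min_cases (β * s₀ ^ 3 / (512 * M)) 1 with ⟨hmin, _⟩ | ⟨hmin, _⟩
    · rw [hmin, show β * (β * s₀ ^ 3 / (512 * M)) / 4 = β ^ 2 * s₀ ^ 3 / (2048 * M) by
        field_simp; ring]
      rw [div_lt_div_iff₀ (by positivity) (by positivity)]
      nlinarith [hη1, hηM, pow_pos hβ 2, pow_pos hs 4, mul_pos (pow_pos hβ 2) (pow_pos hs 4)]
    · rw [hmin, mul_one]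
      rw [div_lt_div_iff₀ (by positivity) (by positivity)]
      nlinarith [hη2, mul_pos hβ hs]
  · rw [div_le_div_iff₀ (by positivity) (by positivity)]
    nlinarith [hη3]
  · rw [show (2:ℝ) * (2 * η / (β * s₀)) = 4 * η / (β * s₀) by ring]
    rw [div_le_div_iff₀ (by positivity) (by positivity)]
    nlinarith [hη1, hηM]
  · rw [div_lt_iff₀ (by positivity)]
    have h3P : 3 * (β * s₀) < Real.pi * (β * s₀) :=
      mul_lt_mul_of_pos_right Real.pi_gt_three (by positivity)
    have hP0 : 0 < β * s₀ := by positivity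
    linarith [hη2]

set_option maxHeartbeats 2000000
/-- Lemma `paradisecity`: for real `p̂ ∈ D̂`, the perturbed potential
`θ ↦ G(θ,p̂)` has no critical points other than `θ₁(p̂), …, θ_{2N}(p̂)`. -/
theorem statement_5 (m N : ℕ) (M β s₀ r₀ η : ℝ)
    (hM : 0 < M) (hβ : 0 < β) (hs : 0 < s₀) (hr : 0 < r₀) (hN : 0 < N) (hη0 : 0 ≤ η)
    (md : MorseData M β s₀ N)
    (D : Set (EuclideanSpace ℝ (Fin m)))
    (G : EuclideanSpace ℂ (Fin m) → ℂ → ℂ)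
    (hGhol : DifferentiableOn ℂ (fun w : EuclideanSpace ℂ (Fin m) × ℂ => G w.1 w.2)
      ((DNbhd D r₀) ×ˢ Strip s₀))
    (hGper : ∀ ph, ∀ q : ℂ, G ph (q + 2 * Real.pi) = G ph q)
    (hGreal : ∀ ph ∈ D, ∀ x : ℝ, (G (cemb ph) (x : ℂ)).im = 0)
    (hGF : ∀ ph ∈ DNbhd D r₀, ∀ q ∈ Strip s₀, ‖G ph q - md.F q‖ ≤ η)
    (hη : η ≤ etaDiamond M β s₀ r₀)
    -- the continued critical points `θ_i(p̂)` of `G(·,p̂)`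
    (θc : ℕ → EuclideanSpace ℂ (Fin m) → ℂ)
    (hθc : ∀ i ≤ 2 * N, DifferentiableOn ℂ (θc i) (DNbhd D r₀) ∧
      ∀ ph ∈ DNbhd D r₀, ‖θc i ph - (md.θ i : ℂ)‖ ≤ 2 * η / (β * s₀) ∧
        deriv (G ph) (θc i ph) = 0)
    (hθreal : ∀ i ≤ 2 * N, ∀ ph ∈ D, (θc i (cemb ph)).im = 0) :
    ∀ ph ∈ D, ∀ x : ℝ,
      (θc (2 * N) (cemb ph)).re - 2 * Real.pi < x →
      x ≤ (θc (2 * N) (cemb ph)).re →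
      deriv (G (cemb ph)) (x : ℂ) = 0 →
      ∃ i, 1 ≤ i ∧ i ≤ 2 * N ∧ (x : ℂ) = θc i (cemb ph) := by
  intro ph hph x hxl hxr hx0
  have hπ := Real.pi_pos
  have h2π : (0:ℝ) < 2 * Real.pi := by linarith
  have hp₀ : cemb ph ∈ DNbhd D r₀ := ⟨ph, hph, by simpa using hr⟩
  set g : ℂ → ℂ := G (cemb ph) with hgdef
  set F : ℂ → ℂ := md.F with hFdef
  have hOpen := isOpen_strip s₀
  -- differentiability of the slice
  have hgd : DifferentiableOn ℂ g (Strip s₀) := by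
    intro q hq
    have h1 : DifferentiableWithinAt ℂ (fun w : EuclideanSpace ℂ (Fin m) × ℂ => G w.1 w.2)
        ((DNbhd D r₀) ×ˢ Strip s₀) (cemb ph, q) := hGhol (cemb ph, q) ⟨hp₀, hq⟩
    have h2 : DifferentiableWithinAt ℂ (fun q' : ℂ => ((cemb ph : EuclideanSpace ℂ (Fin m)), q'))
        (Strip s₀) q :=
      ((differentiableAt_const _).prodMk differentiableAt_id).differentiableWithinAt
    exact h1.comp q h2 (fun q' hq' => Set.mk_mem_prod hp₀ hq')
  have hfd : DifferentiableOn ℂ F (Strip s₀) := md.hol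
  have hg1d : DifferentiableOn ℂ (deriv g) (Strip s₀) := deriv_diffOn hOpen hgd
  have hf1d : DifferentiableOn ℂ (deriv F) (Strip s₀) := deriv_diffOn hOpen hfd
  have hf2d : DifferentiableOn ℂ (deriv (deriv F)) (Strip s₀) := deriv_diffOn hOpen hf1d
  have hga : ∀ z ∈ Strip s₀, DifferentiableAt ℂ g z :=
    fun z hz => hgd.differentiableAt (hOpen.mem_nhds hz)
  have hfa : ∀ z ∈ Strip s₀, DifferentiableAt ℂ F z :=
    fun z hz => hfd.differentiableAt (hOpen.mem_nhds hz)
  have hg1a : ∀ z ∈ Strip s₀, DifferentiableAt ℂ (deriv g) z :=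
    fun z hz => hg1d.differentiableAt (hOpen.mem_nhds hz)
  have hf1a : ∀ z ∈ Strip s₀, DifferentiableAt ℂ (deriv F) z :=
    fun z hz => hf1d.differentiableAt (hOpen.mem_nhds hz)
  have hf2a : ∀ z ∈ Strip s₀, DifferentiableAt ℂ (deriv (deriv F)) z :=
    fun z hz => hf2d.differentiableAt (hOpen.mem_nhds hz)
  -- reality along the real axis
  have hgre : ∀ t : ℝ, (g (t : ℂ)).im = 0 := hGreal ph hph
  have hFre : ∀ t : ℝ, (F (t : ℂ)).im = 0 := md.realF
  have hg1re : ∀ t : ℝ, (deriv g (t : ℂ)).im = 0 :=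
    fun t => im_deriv_zero (hga _ (real_mem_strip hs t)) hgre
  have hg2re : ∀ t : ℝ, (deriv (deriv g) (t : ℂ)).im = 0 :=
    fun t => im_deriv_zero (hg1a _ (real_mem_strip hs t)) hg1re
  have hf1re : ∀ t : ℝ, (deriv F (t : ℂ)).im = 0 :=
    fun t => im_deriv_zero (hfa _ (real_mem_strip hs t)) hFre
  have hf2re : ∀ t : ℝ, (deriv (deriv F) (t : ℂ)).im = 0 :=
    fun t => im_deriv_zero (hf1a _ (real_mem_strip hs t)) hf1re
  -- real traces
  set v : ℝ → ℝ := fun t => (deriv F (t : ℂ)).re with hvdef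
  set w : ℝ → ℝ := fun t => (deriv (deriv F) (t : ℂ)).re with hwdef
  set u : ℝ → ℝ := fun t => (deriv (deriv (deriv F)) (t : ℂ)).re with hudef
  set vg : ℝ → ℝ := fun t => (deriv g (t : ℂ)).re with hvgdef
  set wg : ℝ → ℝ := fun t => (deriv (deriv g) (t : ℂ)).re with hwgdef
  have hvd : ∀ t : ℝ, HasDerivAt v (w t) t :=
    fun t => hasDerivAt_trace (hf1a _ (real_mem_strip hs t))
  have hwd : ∀ t : ℝ, HasDerivAt w (u t) t :=
    fun t => hasDerivAt_trace (hf2a _ (real_mem_strip hs t))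
  have hvgd : ∀ t : ℝ, HasDerivAt vg (wg t) t :=
    fun t => hasDerivAt_trace (hg1a _ (real_mem_strip hs t))
  -- iterated derivative bridge
  have hitd : iteratedDeriv 2 F = deriv (deriv F) := by
    rw [show (2:ℕ) = 1 + 1 from rfl, iteratedDeriv_succ, iteratedDeriv_one]
  -- Cauchy bounds for F
  obtain ⟨hFb1, hFb2, hFb3⟩ := three_bounds hs hfd md.bdd
  -- T bound for u
  set T : ℝ := 128 * M / s₀ ^ 3 with hTdef
  have hTu : ∀ t : ℝ, |u t| ≤ T := by
    intro t
    have h1 := hFb3 (t : ℂ) (by simp; positivity)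
    exact le_trans (Complex.abs_re_le_norm _) h1
  -- lower bound for |v| + |w|
  have hlow : ∀ t : ℝ, β ≤ |v t| + |w t| := by
    intro t
    have h1 := md.lower t
    rw [hitd] at h1
    rwa [abs_eq_abs_re (hf1re t), abs_eq_abs_re (hf2re t)] at h1
  -- N1 : β * s₀ ≤ M
  have hN1 : β * s₀ ≤ M := by
    have h12 : (1:ℕ) ≤ 2 * N := by omega
    have h22 : (2:ℕ) ≤ 2 * N := by omega
    have hw1 : 0 < w (md.θ 1) := by
      have := md.conv 1 h12 rfl
      rwa [hitd] at this
    have hw2 : w (md.θ 2) < 0 := by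
      have := md.conc 2 h22 rfl
      rwa [hitd] at this
    have hθ12 : md.θ 1 < md.θ 2 := md.mono 1 2 (by omega) h22
    have hwc : Continuous w := by
      have : Differentiable ℝ w := fun t => (hwd t).differentiableAt
      exact this.continuous
    obtain ⟨x₀, hx₀I, hwx₀⟩ := intermediate_value_Icc' (le_of_lt hθ12) hwc.continuousOn
      (⟨le_of_lt hw2, le_of_lt hw1⟩ : (0:ℝ) ∈ Set.Icc (w (md.θ 2)) (w (md.θ 1)))
    have hf2z : deriv (deriv F) (x₀ : ℂ) = 0 :=
      Complex.ext (by simpa using hwx₀) (by simpa using hf2re x₀)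
    have key : ∀ r : ℝ, 0 < r → r < s₀ → β * r ^ 1 ≤ M := by
      intro r hr0 hrs
      have hsub : Metric.closedBall ((x₀ : ℝ) : ℂ) r ⊆ Strip s₀ :=
        closedBall_subset_strip (a := 0) (by simp) (by linarith)
      have hb : ‖deriv F (x₀ : ℂ)‖ ≤ M / r :=
        deriv_bound_ball hOpen hfd hr0 hsub (fun z hz => md.bdd z (hsub hz))
      have h1 := md.lower x₀
      rw [hitd, hf2z] at h1
      simp only [norm_zero, add_zero] at h1
      have : β ≤ M / r := le_trans h1 hb
      rw [pow_one]
      exact (le_div_iff₀ hr0).1 this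
    have := mul_pow_le_limit 1 hs key
    rwa [pow_one] at this
  -- N2 : β * s₀ ^ 2 ≤ 4 * M
  have hN2 : β * s₀ ^ 2 ≤ 4 * M := by
    have h2N : 2 * N ≤ 2 * N := le_refl _
    have hc : deriv F ((md.θ (2 * N) : ℝ) : ℂ) = 0 := md.crit (2 * N) h2N
    refine mul_pow_le_limit 2 hs ?_
    intro r hr0 hrs
    have inner : ∀ z : ℂ, |z.im| ≤ r/2 → ‖deriv F z‖ ≤ M / (r/2) := by
      refine strip_deriv_bound (a := r/2) (r := r/2) hfd (by linarith) (by linarith) ?_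
      intro z hz
      exact md.bdd z (by simp only [Strip, Set.mem_setOf_eq]; linarith)
    have h2 : ∀ z : ℂ, |z.im| ≤ 0 →
        ‖deriv (deriv F) z‖ ≤ (M / (r/2)) / (r/2) :=
      strip_deriv_bound (a := 0) (r := r/2) hf1d (by linarith) (by linarith)
        (fun z hz => inner z (by linarith))
    have h3 := h2 ((md.θ (2 * N) : ℝ) : ℂ) (by simp)
    have h1 := md.lower (md.θ (2 * N))
    rw [hitd, hc] at h1
    simp only [norm_zero, zero_add] at h1
    have h4 : β ≤ (M / (r/2)) / (r/2) := le_trans h1 h3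
    have h5 : (M / (r/2)) / (r/2) = 4 * M / r ^ 2 := by
      field_simp; ring
    rw [h5] at h4
    exact (le_div_iff₀ (by positivity)).1 h4
  -- numeric bounds on η
  obtain ⟨hn1, hn2, hn3⟩ := eta_bounds hM hβ hs hr hη hN1 hN2
  obtain ⟨hnumA, hnumB, hnumC, hnumD⟩ := num_facts hM hβ hs hη0 hn1 hn2 hn3
  set ρ : ℝ := β * s₀ ^ 3 / (512 * M) with hρdef
  have hρ0 : 0 < ρ := by positivity
  set d : ℝ := min ρ 1 with hddef
  have hd0 : 0 < d := lt_min hρ0 one_pos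
  have hd1 : d ≤ 1 := min_le_right _ _
  have hdρ : d ≤ ρ := min_le_left _ _
  have hTρ : T * ρ = β / 4 := by
    rw [hTdef, hρdef]; field_simp; ring
  have hT0 : 0 ≤ T := by rw [hTdef]; positivity
  have hTd : T * d ≤ β / 4 := by
    calc T * d ≤ T * ρ := mul_le_mul_of_nonneg_left hdρ hT0
      _ = β / 4 := hTρ
  set ε' : ℝ := 2 * η / (β * s₀) with hε'def
  have hε'0 : 0 ≤ ε' := by positivity
  have hε'2ρ : 2 * ε' ≤ ρ := hnumC
  have hε'ρ : ε' ≤ ρ := by linarith only [hε'2ρ, hε'0]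
  have hε'π : ε' < Real.pi := hnumD
  -- bounds on the difference function
  have hgfb : ∀ z ∈ Strip s₀, ‖g z - F z‖ ≤ η := hGF (cemb ph) hp₀
  obtain ⟨hDb1, hDb2, _⟩ := three_bounds hs (hgd.sub hfd) hgfb
  have hderiv_sub : ∀ z ∈ Strip s₀, deriv (fun z' => g z' - F z') z = deriv g z - deriv F z :=
    fun z hz => deriv_sub (hga z hz) (hfa z hz)
  have hE1 : ∀ t : ℝ, ‖deriv g (t : ℂ) - deriv F (t : ℂ)‖ ≤ 4 * η / s₀ := by
    intro t
    have h1 := hDb1 (t : ℂ) (by simp; positivity)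
    change ‖deriv (fun z' => g z' - F z') (t : ℂ)‖ ≤ _ at h1
    rwa [hderiv_sub _ (real_mem_strip hs t)] at h1
  have hE2 : ∀ t : ℝ, ‖deriv (deriv g) (t : ℂ) - deriv (deriv F) (t : ℂ)‖
      ≤ 16 * η / s₀ ^ 2 := by
    intro t
    have h1 := hDb2 (t : ℂ) (by simp; positivity)
    have heq : deriv (deriv (fun z' => g z' - F z')) (t : ℂ)
        = deriv (deriv g) (t : ℂ) - deriv (deriv F) (t : ℂ) := by
      have heq2 : deriv (fun z' => g z' - F z') =ᶠ[nhds (t : ℂ)]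
          fun z' => deriv g z' - deriv F z' :=
        Filter.eventuallyEq_of_mem (hOpen.mem_nhds (real_mem_strip hs t)) hderiv_sub
      rw [heq2.deriv_eq]
      exact deriv_sub (hg1a _ (real_mem_strip hs t)) (hf1a _ (real_mem_strip hs t))
    change ‖deriv (deriv (fun z' => g z' - F z')) (t : ℂ)‖ ≤ _ at h1
    rwa [heq] at h1
  have hE2β : 16 * η / s₀ ^ 2 ≤ β / 2 := hnumB
  -- AWAY step
  have hvgx : vg x = 0 := by
    show (deriv g (x : ℂ)).re = 0
    rw [hx0]; rfl
  have hvx : |v x| < β * d / 4 := by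
    have h1 : |v x - vg x| ≤ 4 * η / s₀ := by
      have h2 : v x - vg x = (deriv F (x : ℂ) - deriv g (x : ℂ)).re := by
        simp [hvdef, hvgdef, Complex.sub_re]
      rw [h2]
      refine le_trans (Complex.abs_re_le_norm _) ?_
      rw [norm_sub_rev]
      exact hE1 x
    have h3 : 4 * η / s₀ < β * d / 4 := hnumA
    rw [hvgx, sub_zero] at h1
    exact lt_of_le_of_lt h1 h3
  obtain ⟨y, hyx, hvy⟩ := away hvd hwd hTu hβ hlow hd0 hd1 hTd hvx
  have hf1y : deriv F (y : ℂ) = 0 :=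
    Complex.ext (by simpa using hvy) (by simpa using hf1re y)
  -- periodization
  have hFper : Function.Periodic F (2 * (Real.pi : ℂ)) := by
    intro z; exact md.per z
  have hf1per : Function.Periodic (deriv F) (2 * (Real.pi : ℂ)) := periodic_deriv hFper
  have hgper : Function.Periodic g (2 * (Real.pi : ℂ)) := by
    intro z; exact hGper (cemb ph) z
  have hg1per : Function.Periodic (deriv g) (2 * (Real.pi : ℂ)) := periodic_deriv hgper
  have hvgper : Function.Periodic vg (2 * Real.pi) := by
    intro t
    show (deriv g ((t + 2 * Real.pi : ℝ) : ℂ)).re = (deriv g (t : ℂ)).re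
    have : ((t + 2 * Real.pi : ℝ) : ℂ) = (t : ℂ) + 2 * (Real.pi : ℂ) := by push_cast; ring
    rw [this, hg1per (t : ℂ)]
  set k : ℤ := toIocDiv h2π (-Real.pi) y with hkdef
  set y' : ℝ := toIocMod h2π (-Real.pi) y with hy'def
  have hy'mem : y' ∈ Set.Ioc (-Real.pi) Real.pi := by
    have := toIocMod_mem_Ioc h2π (-Real.pi) y
    rwa [show -Real.pi + 2 * Real.pi = Real.pi by ring] at this
  have hy'eq : y' = y - k * (2 * Real.pi) := by
    rw [hy'def, hkdef, toIocMod]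
    rw [zsmul_eq_mul]
  have hf1y' : deriv F (y' : ℂ) = 0 := by
    have hcast : ((y' : ℝ) : ℂ) = (y : ℂ) - (k : ℂ) * (2 * (Real.pi : ℂ)) := by
      rw [hy'eq]; push_cast; ring
    rw [hcast, hf1per.sub_int_mul_eq k]
    exact hf1y
  obtain ⟨i, hi2N, hy'θ⟩ := md.onlycrit y' hy'mem.1 hy'mem.2 hf1y'
  -- θ range facts
  have hθrange : ∀ j, j ≤ 2 * N → -Real.pi ≤ md.θ j ∧ md.θ j ≤ Real.pi := by
    intro j hj
    constructor
    · rcases Nat.eq_zero_or_pos j with h0 | h0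
      · rw [h0, md.first]
      · rw [← md.first]; exact le_of_lt (md.mono 0 j h0 hj)
    · rcases eq_or_lt_of_le hj with heq | hlt
      · rw [heq, md.last]
      · rw [← md.last]; exact le_of_lt (md.mono j (2 * N) hlt (le_refl _))
  -- facts about the continued critical points
  have hY : ∀ j, j ≤ 2 * N → (θc j (cemb ph)).im = 0 ∧
      |(θc j (cemb ph)).re - md.θ j| ≤ ε' ∧ vg ((θc j (cemb ph)).re) = 0 := by
    intro j hj
    have h1 := (hθc j hj).2 (cemb ph) hp₀
    have him := hθreal j hj ph hph
    refine ⟨him, ?_, ?_⟩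
    · have h2 : (θc j (cemb ph)).re - md.θ j = (θc j (cemb ph) - ((md.θ j : ℝ) : ℂ)).re := by
        simp [Complex.sub_re]
      rw [h2]
      exact le_trans (Complex.abs_re_le_norm _) h1.1
    · have he : (((θc j (cemb ph)).re : ℝ) : ℂ) = θc j (cemb ph) :=
        Complex.ext (by simp) (by simp [him])
      show (deriv g (((θc j (cemb ph)).re : ℝ) : ℂ)).re = 0
      rw [he, h1.2]
      rfl
  -- uniqueness of zeros of vg near each critical point
  have hwj : ∀ j, j ≤ 2 * N → β ≤ |w (md.θ j)| := by
    intro j hj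
    have h1 := hlow (md.θ j)
    have h2 : v (md.θ j) = 0 := by
      show (deriv F ((md.θ j : ℝ) : ℂ)).re = 0
      rw [md.crit j hj]; rfl
    rw [h2] at h1
    simpa using h1
  have hwρ : ∀ j, j ≤ 2 * N → ∀ t : ℝ, |t - md.θ j| ≤ ρ → 3 * β / 4 ≤ |w t| := by
    intro j hj t ht
    have h1 : |w (md.θ j) - w t| ≤ T * |md.θ j - t| := lip_bound hwd hTu t (md.θ j)
    have h2 : |md.θ j - t| ≤ ρ := by rwa [abs_sub_comm]
    have h3 : |w (md.θ j) - w t| ≤ β / 4 := by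
      calc |w (md.θ j) - w t| ≤ T * |md.θ j - t| := h1
        _ ≤ T * ρ := mul_le_mul_of_nonneg_left h2 hT0
        _ = β / 4 := hTρ
    have h4 := hwj j hj
    have h5 := abs_sub_abs_le_abs_sub (w (md.θ j)) (w t)
    linarith
  have huniq : ∀ j, j ≤ 2 * N → ∀ a b : ℝ, |a - md.θ j| ≤ ρ → |b - md.θ j| ≤ ρ →
      vg a = 0 → vg b = 0 → a = b := by
    intro j hj a b ha hb hva hvb
    have ha' := abs_le.1 ha
    have hb' := abs_le.1 hb
    refine rolle_unique hvgd (l := md.θ j - ρ) (r := md.θ j + ρ) ?_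
      (by linarith [ha'.1]) (by linarith [ha'.2]) (by linarith [hb'.1]) (by linarith [hb'.2])
      hva hvb
    intro t h1 h2 hzero
    have h3 : |t - md.θ j| ≤ ρ := abs_le.2 ⟨by linarith, by linarith⟩
    have h4 := hwρ j hj t h3
    have h5 : |wg t - w t| ≤ β / 2 := by
      have h6 : wg t - w t = (deriv (deriv g) (t : ℂ) - deriv (deriv F) (t : ℂ)).re := by
        simp [hwgdef, hwdef, Complex.sub_re]
      rw [h6]
      exact le_trans (Complex.abs_re_le_norm _) (le_trans (hE2 t) hE2β)
    rw [hzero] at h5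
    rw [abs_sub_comm] at h5
    have h7 : |w t| ≤ β / 2 := by simpa using h5
    linarith
  have huniqF : ∀ j, j ≤ 2 * N → ∀ a b : ℝ, |a - md.θ j| ≤ ρ → |b - md.θ j| ≤ ρ →
      v a = 0 → v b = 0 → a = b := by
    intro j hj a b ha hb hva hvb
    have ha' := abs_le.1 ha
    have hb' := abs_le.1 hb
    refine rolle_unique hvd (l := md.θ j - ρ) (r := md.θ j + ρ) ?_
      (by linarith [ha'.1]) (by linarith [ha'.2]) (by linarith [hb'.1]) (by linarith [hb'.2])
      hva hvb
    intro t h1 h2 hzero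
    have h3 : |t - md.θ j| ≤ ρ := abs_le.2 ⟨by linarith, by linarith⟩
    have h4 := hwρ j hj t h3
    rw [hzero] at h4
    simp at h4
    linarith
  have hvθ : ∀ j, j ≤ 2 * N → v (md.θ j) = 0 := by
    intro j hj
    show (deriv F ((md.θ j : ℝ) : ℂ)).re = 0
    rw [md.crit j hj]; rfl
  -- separation of critical points
  have hsep0 : ∀ j, 1 ≤ j → j ≤ 2 * N → -Real.pi + ρ < md.θ j := by
    intro j h1 h2
    by_contra hcon
    push_neg at hcon
    have hmono := md.mono 0 j h1 h2
    rw [md.first] at hmono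
    have heq : md.θ j = md.θ 0 := by
      refine huniqF 0 (by omega) (md.θ j) (md.θ 0) ?_ (by simpa using hρ0.le)
        (hvθ j h2) (hvθ 0 (by omega))
      rw [md.first]
      rw [abs_le]
      constructor <;> [linarith; linarith]
    rw [md.first] at heq
    linarith
  have hsepN : ∀ j, j < 2 * N → md.θ j < Real.pi - ρ := by
    intro j h1
    by_contra hcon
    push_neg at hcon
    have hmono := md.mono j (2 * N) h1 (le_refl _)
    rw [md.last] at hmono
    have heq : md.θ j = md.θ (2 * N) := by
      refine huniqF (2 * N) (le_refl _) (md.θ j) (md.θ (2 * N)) ?_ (by simpa using hρ0.le)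
        (hvθ j (le_of_lt h1)) (hvθ (2 * N) (le_refl _))
      rw [md.last]
      rw [abs_le]
      constructor <;> [linarith; linarith]
    rw [md.last] at heq
    linarith
  -- names for the real critical points of g
  obtain ⟨him0, habs0, hvg0⟩ := hY 0 (by omega)
  obtain ⟨himN, habsN, hvgN⟩ := hY (2 * N) (le_refl _)
  obtain ⟨himi, habsi, hvgi⟩ := hY i hi2N
  set y0 : ℝ := (θc 0 (cemb ph)).re with hy0def
  set yN : ℝ := (θc (2 * N) (cemb ph)).re with hyNdef
  set yi : ℝ := (θc i (cemb ph)).re with hyidef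
  rw [md.first] at habs0
  rw [md.last] at habsN
  -- y0 + 2π = yN
  have h0N : y0 + 2 * Real.pi = yN := by
    refine huniq (2 * N) (le_refl _) (y0 + 2 * Real.pi) yN ?_ ?_ ?_ hvgN
    · rw [md.last]
      have : y0 + 2 * Real.pi - Real.pi = y0 - (-Real.pi) := by ring
      rw [this]
      exact le_trans habs0 hε'ρ
    · rw [md.last]; exact le_trans habsN hε'ρ
    · have h1 : vg (y0 + 2 * Real.pi) = vg y0 := hvgper y0
      rw [h1]; exact hvg0
  -- x - 2πk is a zero of vg near θ i
  have hvgx'' : vg (x - (k : ℝ) * (2 * Real.pi)) = 0 := by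
    rw [hvgper.sub_int_mul_eq k]
    exact hvgx
  have hxd : |x - (k : ℝ) * (2 * Real.pi) - md.θ i| < d := by
    have hyk : y = md.θ i + (k : ℝ) * (2 * Real.pi) := by
      have := hy'eq
      rw [hy'θ] at this
      linarith
    have : x - (k : ℝ) * (2 * Real.pi) - md.θ i = x - y := by rw [hyk]; ring
    rw [this, abs_sub_comm]
    exact hyx
  have hxyi : x - (k : ℝ) * (2 * Real.pi) = yi :=
    huniq i hi2N _ yi (le_of_lt (lt_of_lt_of_le hxd hdρ)) (le_trans habsi hε'ρ) hvgx'' hvgi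
  have hxeq : x = yi + (k : ℝ) * (2 * Real.pi) := by linarith
  -- pinning down k
  have hθi := hθrange i hi2N
  have hxrN : x ≤ yN := hxr
  have hxlN : yN - 2 * Real.pi < x := hxl
  have habs0' := abs_le.1 habs0
  have habsN' := abs_le.1 habsN
  have habsi' := abs_le.1 habsi
  have hθiu := hθi.1
  have hθil := hθi.2
  have hku : (k : ℝ) < 2 := by
    have h1 : (k : ℝ) * (2 * Real.pi) < 2 * (2 * Real.pi) := by
      linarith only [hxeq, hxrN, habsN'.1, habsN'.2, habsi'.1, habsi'.2, hθiu, hθil, hε'π]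
    exact lt_of_mul_lt_mul_right h1 h2π.le
  have hkl : (-2 : ℝ) < (k : ℝ) := by
    have h1 : (-2 : ℝ) * (2 * Real.pi) < (k : ℝ) * (2 * Real.pi) := by
      linarith only [hxeq, hxlN, habsN'.1, habsN'.2, habsi'.1, habsi'.2, hθiu, hθil, hε'π]
    exact lt_of_mul_lt_mul_right h1 h2π.le
  have hku' : k ≤ 1 := by
    have : k < 2 := by exact_mod_cast hku
    omega
  have hkl' : -1 ≤ k := by
    have : -2 < k := by exact_mod_cast hkl
    omega
  interval_cases k
  · -- k = -1 : forces i = 2N and a contradiction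
    exfalso
    push_cast at hxeq
    have hieq : i = 2 * N := by
      by_contra hne
      have hlt : i < 2 * N := lt_of_le_of_ne hi2N hne
      have h5 := hsepN i hlt
      linarith only [hxeq, hxlN, habsi'.2, habsN'.1, hε'2ρ, hε'0, h5]
    have hyy : yi = yN := by
      rw [hieq] at hyidef; rw [hyidef, hyNdef]
    linarith only [hxeq, hxlN, hyy]
  · -- k = 0
    push_cast at hxeq
    have hxyi0 : x = yi := by linarith only [hxeq]
    rcases Nat.eq_zero_or_pos i with hi0 | hi1
    · exfalso
      have hyy : yi = y0 := by rw [hi0] at hyidef; rw [hyidef, hy0def]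
      linarith only [hxyi0, hyy, h0N, hxlN]
    · refine ⟨i, hi1, hi2N, ?_⟩
      refine Complex.ext ?_ ?_
      · rw [Complex.ofReal_re, hxyi0, hyidef]
      · rw [Complex.ofReal_im, himi]
  · -- k = 1 : forces i = 0, so x = yN
    push_cast at hxeq
    have hieq : i = 0 := by
      by_contra hne
      have h1i : 1 ≤ i := by omega
      have h5 := hsep0 i h1i hi2N
      linarith only [hxeq, hxrN, habsi'.1, habsN'.2, hε'2ρ, hε'0, h5]
    have hyy : yi = y0 := by rw [hieq] at hyidef; rw [hyidef, hy0def]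
    have hxN : x = yN := by linarith only [hxeq, hyy, h0N]
    refine ⟨2 * N, by omega, le_refl _, ?_⟩
    refine Complex.ext ?_ ?_
    · rw [Complex.ofReal_re, hxN, hyNdef]
    · rw [Complex.ofReal_im, himN]
end
end

section
/- Let s₀, 𝜂 > 0 and let G be a 2π-periodic holomorphic function on 𝕋_{s₀}, real on reals, satisfying sup_{𝕋_{s₀}}|G(θ) + 𝜂 cos θ| ≤ 𝔠𝜂 for some 0 < 𝔠 ≤ (1/4)·min{1, s₀²}. Then G is (M,β,s₀)-Morse-non-degenerate with β = 𝜂/4 and M = 𝜂(𝔠 + cosh s₀) ≤ 𝜂(1/4 + cosh s₀). Moreover G has exactly two non-degenerate critical points per period (one maximum and one minimum). -/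
noncomputable section

open Complex Set

/-- Cauchy estimate on a closed disk. -/
lemma cauchy_disk_est {f : ℂ → ℂ} {z : ℂ} {r C : ℝ} (hr : 0 < r)
    (hf : DifferentiableOn ℂ f (Metric.closedBall z r))
    (hC : ∀ w ∈ Metric.closedBall z r, ‖f w‖ ≤ C) (n : ℕ) :
    ‖iteratedDeriv n f z‖ ≤ (Nat.factorial n) * C / r ^ n := by
  have hC0 : 0 ≤ C := le_trans (norm_nonneg _) (hC z (Metric.mem_closedBall_self hr.le))
  set R : NNReal := ⟨r, hr.le⟩ with hR
  have hball : HasFPowerSeriesOnBall f (cauchyPowerSeries f z R) z R :=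
    hf.hasFPowerSeriesOnBall (by exact_mod_cast hr)
  have hfac := hball.factorial_smul (1 : ℂ) n
  have h1 : iteratedDeriv n f z = n.factorial • (cauchyPowerSeries f z R n fun _ => (1 : ℂ)) := by
    rw [iteratedDeriv_eq_iteratedFDeriv, ← hfac]
  have hnorm1 : ‖iteratedDeriv n f z‖
      = (Nat.factorial n : ℝ) * ‖cauchyPowerSeries f z R n fun _ => (1:ℂ)‖ := by
    rw [h1, RCLike.norm_nsmul (K := ℂ)]; simp [nsmul_eq_mul]
  have h2 : ‖cauchyPowerSeries f z R n fun _ => (1:ℂ)‖ ≤ ‖cauchyPowerSeries f z R n‖ := by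
    refine le_trans ((cauchyPowerSeries f z R n).le_opNorm _) ?_
    simp
  have h3 : ‖cauchyPowerSeries f z (R : ℝ) n‖ ≤
      ((2 * Real.pi)⁻¹ * ∫ θ : ℝ in (0)..2 * Real.pi, ‖f (circleMap z R θ)‖) * |(R : ℝ)|⁻¹ ^ n :=
    norm_cauchyPowerSeries_le f z R n
  have hcont : Continuous fun θ : ℝ => ‖f (circleMap z r θ)‖ := by
    refine Continuous.norm ?_
    have : ContinuousOn f (Metric.closedBall z r) := hf.continuousOn
    refine continuousOn_univ.1 ?_
    refine this.comp (continuous_circleMap z r).continuousOn fun θ _ => ?_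
    exact Metric.sphere_subset_closedBall (circleMap_mem_sphere z hr.le θ)
  have h4 : (∫ θ : ℝ in (0)..2 * Real.pi, ‖f (circleMap z r θ)‖) ≤ 2 * Real.pi * C := by
    have := intervalIntegral.integral_mono_on (μ := MeasureTheory.volume) (a := 0)
      (b := 2 * Real.pi)
      (f := fun θ : ℝ => ‖f (circleMap z r θ)‖) (g := fun _ => C)
      Real.two_pi_pos.le (hcont.intervalIntegrable _ _) (intervalIntegrable_const)
      (fun θ _ => hC _ (Metric.sphere_subset_closedBall (circleMap_mem_sphere z hr.le θ)))
    simpa using this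
  have hRr : (R : ℝ) = r := rfl
  rw [hnorm1]
  calc (Nat.factorial n : ℝ) * ‖cauchyPowerSeries f z R n fun _ => (1:ℂ)‖
      ≤ (Nat.factorial n : ℝ) * (((2 * Real.pi)⁻¹ * (2 * Real.pi * C)) * |r|⁻¹ ^ n) := by
        refine mul_le_mul_of_nonneg_left (le_trans h2 (le_trans h3 ?_)) (by positivity)
        rw [hRr]
        refine mul_le_mul_of_nonneg_right ?_ (by positivity)
        exact mul_le_mul_of_nonneg_left h4 (by positivity)
    _ = (Nat.factorial n) * C / r ^ n := by
        rw [_root_.abs_of_nonneg hr.le]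
        field_simp
        rw [div_pow, one_pow, mul_assoc, div_mul_cancel₀ _ (pow_ne_zero n hr.ne'), mul_one]

/-- Cauchy estimate at real points in a strip, with radius `min 1 s₀`. -/
lemma cauchy_strip {s₀ C : ℝ} {f : ℂ → ℂ} (hs : 0 < s₀)
    (hf : DifferentiableOn ℂ f (Strip s₀)) (hC : ∀ z ∈ Strip s₀, ‖f z‖ ≤ C) (x : ℝ) (n : ℕ) :
    ‖iteratedDeriv n f (x:ℂ)‖ ≤ (Nat.factorial n) * C / (min 1 s₀) ^ n := by
  set ρ := min 1 s₀ with hρ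
  have hρ0 : 0 < ρ := lt_min one_pos hs
  have key : ∀ r : ℝ, 0 < r → r < s₀ →
      ‖iteratedDeriv n f (x:ℂ)‖ ≤ (Nat.factorial n) * C / r ^ n := by
    intro r hr0 hrs
    have hsub : Metric.closedBall (x:ℂ) r ⊆ Strip s₀ := by
      intro w hw
      simp only [Metric.mem_closedBall] at hw
      have h1 : |w.im| = |(w - (x:ℂ)).im| := by simp
      have h2 : |(w - (x:ℂ)).im| ≤ ‖w - (x:ℂ)‖ := Complex.abs_im_le_norm _
      have h3 : ‖w - (x:ℂ)‖ ≤ r := by rw [← Complex.dist_eq]; exact hw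
      show |w.im| < s₀
      rw [h1]; exact lt_of_le_of_lt (h2.trans h3) hrs
    exact cauchy_disk_est hr0 (hf.mono hsub) (fun w hw => hC w (hsub hw)) n
  have hρs : ρ ≤ s₀ := min_le_right _ _
  have htend : Filter.Tendsto (fun r : ℝ => (Nat.factorial n : ℝ) * C / r ^ n)
      (nhdsWithin ρ (Set.Iio ρ)) (nhds ((Nat.factorial n : ℝ) * C / ρ ^ n)) := by
    apply Filter.Tendsto.mono_left _ nhdsWithin_le_nhds
    exact (ContinuousAt.div continuousAt_const ((continuous_pow n).continuousAt)
      (pow_ne_zero n hρ0.ne'))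
  refine ge_of_tendsto htend ?_
  filter_upwards [Ioo_mem_nhdsLT_of_mem (Set.mem_Ioc.mpr ⟨hρ0, le_refl ρ⟩)] with r hr
  exact key r hr.1 (lt_of_lt_of_le hr.2 hρs)

/-- The derivative of a periodic function is periodic. -/
lemma periodic_deriv_aux (f : ℂ → ℂ) (p : ℂ) (h : ∀ z : ℂ, f (z + p) = f z) (z : ℂ) :
    deriv f (z + p) = deriv f z := by
  rw [← deriv_comp_add_const]
  congr 1
  funext w
  rw [h]

set_option maxHeartbeats 2000000 in
/-- Lemma `sibillini`: a `2π`-periodic real-analytic function `G` with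
`sup_{𝕋_{s₀}}|G(θ) + 𝜂 cos θ| ≤ 𝔠𝜂`, `0 < 𝔠 ≤ (1/4)min{1,s₀²}`, is
`(𝜂(𝔠 + cosh s₀), 𝜂/4, s₀)`-Morse-non-degenerate and has exactly two (non-degenerate)
critical points per period, a maximum and a minimum. -/
theorem statement_18 (s₀ et c : ℝ) (hs : 0 < s₀) (het : 0 < et)
    (hc0 : 0 < c) (hc : c ≤ 1 / 4 * min 1 (s₀ ^ 2))
    (G : ℂ → ℂ)
    (hGhol : DifferentiableOn ℂ G (Strip s₀))
    (hGper : ∀ z : ℂ, G (z + 2 * Real.pi) = G z)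
    (hGreal : ∀ x : ℝ, (G (x : ℂ)).im = 0)
    (hGclose : ∀ z ∈ Strip s₀, ‖G z + et * Complex.cos z‖ ≤ c * et) :
    -- the Morse bound `M = 𝜂(𝔠 + cosh s₀) ≤ 𝜂(1/4 + cosh s₀)`
    (∀ z ∈ Strip s₀, ‖G z‖ ≤ et * (c + Real.cosh s₀)) ∧
    et * (c + Real.cosh s₀) ≤ et * (1 / 4 + Real.cosh s₀) ∧
    -- the non-degeneracy bound `β = 𝜂/4`
    (∀ x : ℝ, et / 4 ≤ ‖deriv G (x : ℂ)‖ +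
      ‖iteratedDeriv 2 G (x : ℂ)‖) ∧
    -- exactly two non-degenerate critical points per period, with separated critical values
    ∃ θmin θmax : ℝ,
      θmin ∈ Set.Ioc (-Real.pi) Real.pi ∧ θmax ∈ Set.Ioc (-Real.pi) Real.pi ∧
      θmin ≠ θmax ∧
      deriv G (θmin : ℂ) = 0 ∧ deriv G (θmax : ℂ) = 0 ∧
      0 < (iteratedDeriv 2 G (θmin : ℂ)).re ∧ (iteratedDeriv 2 G (θmax : ℂ)).re < 0 ∧
      et / 4 ≤ ‖G (θmax : ℂ) - G (θmin : ℂ)‖ ∧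
      ∀ x ∈ Set.Ioc (-Real.pi) Real.pi,
        deriv G ((x : ℝ) : ℂ) = 0 → x = θmin ∨ x = θmax := by
  have hπ := Real.pi_pos
  set ρ : ℝ := min 1 s₀ with hρdef
  have hρ0 : 0 < ρ := lt_min one_pos hs
  have hρ1 : ρ ≤ 1 := min_le_left _ _
  have hρ2 : ρ ^ 2 = min 1 (s₀ ^ 2) := by
    rcases le_total s₀ 1 with h | h
    · rw [hρdef, min_eq_right h, min_eq_right (by nlinarith)]
    · rw [hρdef, min_eq_left h, min_eq_left (by nlinarith), one_pow]
  have hcρ : c ≤ ρ ^ 2 / 4 := by rw [hρ2]; linarith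
  have hc14 : c ≤ 1 / 4 := by nlinarith [min_le_left (1:ℝ) (s₀ ^ 2)]
  have hopen : IsOpen (Strip s₀) := by
    have h : Strip s₀ = (fun z : ℂ => |z.im|) ⁻¹' (Iio s₀) := rfl
    rw [h]
    exact (continuous_abs.comp Complex.continuous_im).isOpen_preimage _ isOpen_Iio
  have hmem : ∀ x : ℝ, (x : ℂ) ∈ Strip s₀ := fun x => by
    simp only [Strip, mem_setOf_eq, Complex.ofReal_im, abs_zero]; exact hs
  have hGd : ∀ z ∈ Strip s₀, DifferentiableAt ℂ G z := fun z hz =>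
    hGhol.differentiableAt (hopen.mem_nhds hz)
  have hA : AnalyticOnNhd ℂ G (Strip s₀) := hGhol.analyticOnNhd hopen
  have hA' : AnalyticOnNhd ℂ (deriv G) (Strip s₀) := hA.deriv
  -- the perturbation H
  set H : ℂ → ℂ := fun z => G z + et * Complex.cos z with hHdef
  have hHd : DifferentiableOn ℂ H (Strip s₀) := by
    exact hGhol.add (((differentiable_const (et:ℂ)).mul Complex.differentiable_cos).differentiableOn)
  have hHb : ∀ z ∈ Strip s₀, ‖H z‖ ≤ c * et := fun z hz => by
    exact hGclose z hz
  have h2eq : iteratedDeriv 2 H = deriv (deriv H) := by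
    rw [iteratedDeriv_succ, iteratedDeriv_one]
  have h2eqG : iteratedDeriv 2 G = deriv (deriv G) := by
    rw [iteratedDeriv_succ, iteratedDeriv_one]
  have hderivH : ∀ z ∈ Strip s₀, deriv H z = deriv G z - et * Complex.sin z := by
    intro z hz
    have h1 : HasDerivAt H (deriv G z + et * (-Complex.sin z)) z :=
      ((hGd z hz).hasDerivAt).add (((Complex.hasDerivAt_cos z).const_mul (et:ℂ)))
    rw [h1.deriv]; ring
  have hderiv2H : ∀ z ∈ Strip s₀, iteratedDeriv 2 H z = iteratedDeriv 2 G z - et * Complex.cos z := by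
    intro z hz
    have heq : deriv H =ᶠ[nhds z] fun w => deriv G w - et * Complex.sin w :=
      Filter.eventually_of_mem (hopen.mem_nhds hz) hderivH
    have hG2 : HasDerivAt (deriv G) (deriv (deriv G) z) z :=
      ((hA' z hz).differentiableAt).hasDerivAt
    have h2 : HasDerivAt (fun w => deriv G w - et * Complex.sin w)
        (deriv (deriv G) z - et * Complex.cos z) z :=
      hG2.sub ((Complex.hasDerivAt_sin z).const_mul (et:ℂ))
    rw [h2eq, heq.deriv_eq, h2.deriv, h2eqG]
  -- complex bounds at real points
  have B1 : ∀ x : ℝ, ‖deriv G (x:ℂ) - et * Complex.sin (x:ℂ)‖ ≤ et * ρ / 4 := by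
    intro x
    have h := cauchy_strip hs hHd hHb x 1
    rw [iteratedDeriv_one, hderivH _ (hmem x)] at h
    refine h.trans ?_
    have : (Nat.factorial 1 : ℝ) = 1 := by norm_num [Nat.factorial]
    rw [this, pow_one, one_mul, div_le_iff₀ hρ0]
    nlinarith [mul_le_mul_of_nonneg_right hcρ het.le]
  have B1' : ∀ x : ℝ, ‖deriv G (x:ℂ) - et * Complex.sin (x:ℂ)‖ ≤ et / 4 := by
    intro x
    refine (B1 x).trans ?_
    nlinarith
  have B2 : ∀ x : ℝ, ‖iteratedDeriv 2 G (x:ℂ) - et * Complex.cos (x:ℂ)‖ ≤ et / 2 := by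
    intro x
    have h := cauchy_strip hs hHd hHb x 2
    rw [hderiv2H _ (hmem x)] at h
    refine h.trans ?_
    have hf2 : (Nat.factorial 2 : ℝ) = 2 := by norm_num [Nat.factorial]
    rw [hf2, div_le_iff₀ (by positivity)]
    nlinarith [mul_le_mul_of_nonneg_right hcρ het.le]
  -- imaginary part of deriv G vanishes on ℝ
  have hIm1 : ∀ x : ℝ, (deriv G (x:ℂ)).im = 0 := by
    intro x
    have h1 : HasDerivAt (fun z => -Complex.I * G z) (-Complex.I * deriv G (x:ℂ)) (x:ℂ) :=
      ((hGd _ (hmem x)).hasDerivAt).const_mul (-Complex.I)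
    have h2 := h1.real_of_complex
    have h3 : (fun y : ℝ => ((-Complex.I * G (y:ℂ)).re)) = fun _ => (0:ℝ) := by
      funext y
      simp [Complex.mul_re, hGreal y]
    rw [h3] at h2
    have h4 := (hasDerivAt_const (x:ℝ) (0:ℝ)).unique h2
    simpa [Complex.mul_re] using h4.symm
  -- the real function φ = Re (G')
  set φ : ℝ → ℝ := fun x => (deriv G (x:ℂ)).re with hφdef
  have hφd : ∀ x : ℝ, HasDerivAt φ ((iteratedDeriv 2 G (x:ℂ)).re) x := by
    intro x
    have h1 : HasDerivAt (deriv G) (deriv (deriv G) (x:ℂ)) (x:ℂ) :=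
      ((hA' _ (hmem x)).differentiableAt).hasDerivAt
    have h2 := h1.real_of_complex
    rw [h2eqG]
    exact h2
  have hφc : Continuous φ := by
    rw [continuous_iff_continuousAt]
    exact fun x => (hφd x).differentiableAt.continuousAt
  -- real bounds
  have Rb1 : ∀ x : ℝ, |φ x - et * Real.sin x| ≤ et / 4 := by
    intro x
    have h := B1' x
    have h2 : (deriv G (x:ℂ) - et * Complex.sin (x:ℂ)).re = φ x - et * Real.sin x := by
      simp [hφdef, Complex.sin_ofReal_re]
    calc |φ x - et * Real.sin x| = |(deriv G (x:ℂ) - et * Complex.sin (x:ℂ)).re| := by rw [h2]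
      _ ≤ ‖deriv G (x:ℂ) - et * Complex.sin (x:ℂ)‖ := Complex.abs_re_le_norm _
      _ ≤ et / 4 := h
  have Rb2 : ∀ x : ℝ, |(iteratedDeriv 2 G (x:ℂ)).re - et * Real.cos x| ≤ et / 2 := by
    intro x
    have h := B2 x
    have h2 : (iteratedDeriv 2 G (x:ℂ) - et * Complex.cos (x:ℂ)).re
        = (iteratedDeriv 2 G (x:ℂ)).re - et * Real.cos x := by
      simp [Complex.cos_ofReal_re]
    calc |(iteratedDeriv 2 G (x:ℂ)).re - et * Real.cos x|
        = |(iteratedDeriv 2 G (x:ℂ) - et * Complex.cos (x:ℂ)).re| := by rw [h2]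
      _ ≤ ‖iteratedDeriv 2 G (x:ℂ) - et * Complex.cos (x:ℂ)‖ := Complex.abs_re_le_norm _
      _ ≤ et / 2 := h
  -- trigonometric helpers
  have hcos_ge3 : ∀ t : ℝ, |t| ≤ Real.pi / 3 → (1:ℝ)/2 ≤ Real.cos t := by
    intro t ht
    have h1 : Real.cos (Real.pi/3) ≤ Real.cos |t| :=
      Real.cos_le_cos_of_nonneg_of_le_pi (abs_nonneg t) (by linarith) ht
    rw [Real.cos_abs, Real.cos_pi_div_three] at h1
    exact h1
  have hcos_ge6 : ∀ t : ℝ, |t| ≤ Real.pi / 6 → Real.sqrt 3 / 2 ≤ Real.cos t := by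
    intro t ht
    have h1 : Real.cos (Real.pi/6) ≤ Real.cos |t| :=
      Real.cos_le_cos_of_nonneg_of_le_pi (abs_nonneg t) (by linarith) ht
    rw [Real.cos_abs, Real.cos_pi_div_six] at h1
    exact h1
  have hsin_ge : ∀ x : ℝ, Real.pi/6 ≤ x → x ≤ 5*Real.pi/6 → (1:ℝ)/2 ≤ Real.sin x := by
    intro x h1 h2
    rw [← Real.cos_pi_div_two_sub]
    apply hcos_ge3
    rw [abs_le]
    constructor <;> linarith
  have hsq3 : (1:ℝ) < Real.sqrt 3 := by
    nlinarith [Real.sq_sqrt (show (0:ℝ) ≤ 3 by norm_num), Real.sqrt_nonneg 3]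
  -- Goal 1
  refine ⟨?_, ?_, ?_, ?_⟩
  · intro z hz
    have h1 := hGclose z hz
    have hcosb : ‖Complex.cos z‖ ≤ Real.cosh s₀ := by
      have he : Complex.cos z = (Complex.exp (z * Complex.I) + Complex.exp (-z * Complex.I)) / 2 :=
        rfl
      have htri : ‖Complex.exp (z * Complex.I) + Complex.exp (-z * Complex.I)‖
          ≤ Real.exp (-z.im) + Real.exp z.im := by
        refine (norm_add_le _ _).trans ?_
        rw [Complex.norm_exp, Complex.norm_exp]
        simp [Complex.mul_I_re]
      have h5 : ‖Complex.cos z‖ ≤ (Real.exp (-z.im) + Real.exp z.im) / 2 := by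
        rw [he, norm_div, Complex.norm_two]
        linarith
      have h6 : (Real.exp (-z.im) + Real.exp z.im) / 2 = Real.cosh z.im := by
        rw [Real.cosh_eq]; ring
      have h7 : Real.cosh z.im ≤ Real.cosh s₀ := by
        rw [← Real.cosh_abs]
        rw [Real.cosh_le_cosh]
        rw [_root_.abs_abs, _root_.abs_of_pos hs]
        exact hz.le
      linarith
    have h2 : ‖(et:ℂ) * Complex.cos z‖ ≤ et * Real.cosh s₀ := by
      rw [norm_mul, Complex.norm_real, Real.norm_eq_abs, _root_.abs_of_pos het]
      exact mul_le_mul_of_nonneg_left hcosb het.le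
    have h3 : G z = (G z + et * Complex.cos z) - et * Complex.cos z := by ring
    rw [h3]
    calc ‖(G z + et * Complex.cos z) - et * Complex.cos z‖
        ≤ ‖G z + et * Complex.cos z‖ + ‖(et:ℂ) * Complex.cos z‖ := by
          simpa using
            norm_sub_le (G z + et * Complex.cos z) ((et:ℂ) * Complex.cos z)
      _ ≤ c * et + et * Real.cosh s₀ := add_le_add h1 h2
      _ = et * (c + Real.cosh s₀) := by ring
  · nlinarith [Real.cosh_pos (x := s₀)]
  -- Goal 3 : the Morse lower bound
  · intro x
    have b1 := B1' x
    have b2 := B2 x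
    have s1 : et * |Real.sin x| ≤ ‖deriv G (x:ℂ)‖ + et / 4 := by
      have ht : ‖(et:ℂ) * Complex.sin (x:ℂ)‖
          ≤ ‖deriv G (x:ℂ)‖ + ‖deriv G (x:ℂ) - et * Complex.sin (x:ℂ)‖ := by
        have := norm_sub_le (deriv G (x:ℂ)) (deriv G (x:ℂ) - et * Complex.sin (x:ℂ))
        simpa using this
      have he : ‖(et:ℂ) * Complex.sin (x:ℂ)‖ = et * |Real.sin x| := by
        rw [← Complex.ofReal_sin, ← Complex.ofReal_mul, Complex.norm_real, Real.norm_eq_abs, abs_mul,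
          _root_.abs_of_pos het]
      rw [he] at ht
      linarith
    have s2 : et * |Real.cos x| ≤ ‖iteratedDeriv 2 G (x:ℂ)‖ + et / 2 := by
      have ht : ‖(et:ℂ) * Complex.cos (x:ℂ)‖
          ≤ ‖iteratedDeriv 2 G (x:ℂ)‖
            + ‖iteratedDeriv 2 G (x:ℂ) - et * Complex.cos (x:ℂ)‖ := by
        have := norm_sub_le (iteratedDeriv 2 G (x:ℂ))
          (iteratedDeriv 2 G (x:ℂ) - et * Complex.cos (x:ℂ))
        simpa using this
      have he : ‖(et:ℂ) * Complex.cos (x:ℂ)‖ = et * |Real.cos x| := by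
        rw [← Complex.ofReal_cos, ← Complex.ofReal_mul, Complex.norm_real, Real.norm_eq_abs, abs_mul,
          _root_.abs_of_pos het]
      rw [he] at ht
      linarith
    have hsc : 1 ≤ |Real.sin x| + |Real.cos x| := by
      have e1 : |Real.sin x|^2 + |Real.cos x|^2 = 1 := by
        rw [_root_.sq_abs, _root_.sq_abs]; exact Real.sin_sq_add_cos_sq x
      have q1 : |Real.sin x|^2 ≤ |Real.sin x| := by
        nlinarith [abs_nonneg (Real.sin x), Real.abs_sin_le_one x]
      have q2 : |Real.cos x|^2 ≤ |Real.cos x| := by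
        nlinarith [abs_nonneg (Real.cos x), Real.abs_cos_le_one x]
      linarith
    nlinarith [mul_le_mul_of_nonneg_left hsc het.le]
  · -- critical points
    have hzsin : ∀ x : ℝ, deriv G (x:ℂ) = 0 → |Real.sin x| ≤ 1/4 := by
      intro x hx
      have h := Rb1 x
      have hφx : φ x = 0 := by rw [hφdef]; simp [hx]
      rw [hφx, zero_sub, abs_neg, abs_mul, _root_.abs_of_pos het] at h
      by_contra hcon
      push_neg at hcon
      nlinarith [mul_lt_mul_of_pos_left hcon het]
    have hφval : ∀ x : ℝ, et * Real.sin x - et/4 ≤ φ x ∧ φ x ≤ et * Real.sin x + et/4 := by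
      intro x
      have h := abs_le.mp (Rb1 x)
      exact ⟨by linarith [h.1], by linarith [h.2]⟩
    have hψpos : ∀ x : ℝ, |x| ≤ Real.pi/6 → 0 < (iteratedDeriv 2 G (x:ℂ)).re := by
      intro x hx
      have h := abs_le.mp (Rb2 x)
      have h2 := hcos_ge6 x hx
      nlinarith [h.1, mul_le_mul_of_nonneg_left h2 het.le,
        mul_lt_mul_of_pos_left hsq3 het]
    have hψneg : ∀ x : ℝ, |x - Real.pi| ≤ Real.pi/6 → (iteratedDeriv 2 G (x:ℂ)).re < 0 := by
      intro x hx
      have h := abs_le.mp (Rb2 x)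
      have h2 := hcos_ge6 (x - Real.pi) hx
      have h4 := Real.cos_sub_pi x
      have hcx : Real.cos x ≤ -(Real.sqrt 3/2) := by linarith
      nlinarith [h.2, mul_le_mul_of_nonneg_left hcx het.le,
        mul_lt_mul_of_pos_left hsq3 het]
    have hmono : StrictMonoOn φ (Icc (-(Real.pi/6)) (Real.pi/6)) := by
      refine strictMonoOn_of_deriv_pos (convex_Icc _ _) hφc.continuousOn ?_
      intro x hx
      rw [interior_Icc, mem_Ioo] at hx
      rw [(hφd x).deriv]
      exact hψpos x (abs_le.mpr ⟨by linarith [hx.1], hx.2.le⟩)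
    have hanti : StrictAntiOn φ (Icc (5*Real.pi/6) (7*Real.pi/6)) := by
      refine strictAntiOn_of_deriv_neg (convex_Icc _ _) hφc.continuousOn ?_
      intro x hx
      rw [interior_Icc, mem_Ioo] at hx
      rw [(hφd x).deriv]
      refine hψneg x (abs_le.mpr ⟨by linarith [hx.1], by linarith [hx.2]⟩)
    have hsin6 : Real.sin (Real.pi/6) = 1/2 := Real.sin_pi_div_six
    have hv1 : φ (-(Real.pi/6)) < 0 := by
      have h := (hφval (-(Real.pi/6))).2
      rw [Real.sin_neg, hsin6] at h
      nlinarith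
    have hv2 : 0 < φ (Real.pi/6) := by
      have h := (hφval (Real.pi/6)).1
      rw [hsin6] at h
      nlinarith
    have hsin56 : Real.sin (5*Real.pi/6) = 1/2 := by
      rw [show (5*Real.pi/6 : ℝ) = Real.pi - Real.pi/6 by ring, Real.sin_pi_sub, hsin6]
    have hsin76 : Real.sin (7*Real.pi/6) = -(1/2) := by
      rw [show (7*Real.pi/6 : ℝ) = Real.pi/6 + Real.pi by ring, Real.sin_add_pi, hsin6]
    have hv3 : 0 < φ (5*Real.pi/6) := by
      have h := (hφval (5*Real.pi/6)).1
      rw [hsin56] at h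
      nlinarith
    have hv4 : φ (7*Real.pi/6) < 0 := by
      have h := (hφval (7*Real.pi/6)).2
      rw [hsin76] at h
      nlinarith
    obtain ⟨θmin, hθminIoo, hθmin0⟩ :
        ∃ θ ∈ Ioo (-(Real.pi/6)) (Real.pi/6), φ θ = 0 := by
      have hsub := intermediate_value_Ioo (a := -(Real.pi/6)) (b := Real.pi/6)
        (by linarith) hφc.continuousOn
      obtain ⟨θ, hθ, hθ0⟩ := hsub (mem_Ioo.mpr ⟨hv1, hv2⟩)
      exact ⟨θ, hθ, hθ0⟩
    obtain ⟨θs, hθsIoo, hθs0⟩ :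
        ∃ θ ∈ Ioo (5*Real.pi/6) (7*Real.pi/6), φ θ = 0 := by
      have hsub := intermediate_value_Ioo' (a := 5*Real.pi/6) (b := 7*Real.pi/6)
        (by linarith) hφc.continuousOn
      obtain ⟨θ, hθ, hθ0⟩ := hsub (mem_Ioo.mpr ⟨hv4, hv3⟩)
      exact ⟨θ, hθ, hθ0⟩
    have hzeroC : ∀ x : ℝ, φ x = 0 → deriv G (x:ℂ) = 0 := by
      intro x hx
      rw [hφdef] at hx
      apply Complex.ext
      · simpa using hx
      · simpa using hIm1 x
    have hper1 : ∀ z : ℂ, deriv G (z + 2*(Real.pi:ℂ)) = deriv G z :=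
      periodic_deriv_aux G _ hGper
    have hper2 : ∀ z : ℂ, iteratedDeriv 2 G (z + 2*(Real.pi:ℂ)) = iteratedDeriv 2 G z := by
      intro z
      rw [h2eqG]
      exact periodic_deriv_aux (deriv G) _ hper1 z
    have hθminC : deriv G (θmin:ℂ) = 0 := hzeroC _ hθmin0
    have habs6 : |θmin| ≤ Real.pi/6 := abs_le.mpr ⟨by linarith [hθminIoo.1], hθminIoo.2.le⟩
    have hθminψ : 0 < (iteratedDeriv 2 G (θmin:ℂ)).re := hψpos θmin habs6
    have habsS : |θs - Real.pi| ≤ Real.pi/6 :=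
      abs_le.mpr ⟨by linarith [hθsIoo.1], by linarith [hθsIoo.2]⟩
    have hθsC : deriv G (θs:ℂ) = 0 := hzeroC _ hθs0
    have hθsψ : (iteratedDeriv 2 G (θs:ℂ)).re < 0 := hψneg θs habsS
    have hGval : ∀ x : ℝ, |(G (x:ℂ)).re + et * Real.cos x| ≤ c * et := by
      intro x
      have h := hGclose (x:ℂ) (hmem x)
      have h2 : (G (x:ℂ) + et * Complex.cos (x:ℂ)).re = (G (x:ℂ)).re + et * Real.cos x := by
        simp [Complex.cos_ofReal_re]
      calc |(G (x:ℂ)).re + et * Real.cos x|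
          = |(G (x:ℂ) + et * Complex.cos (x:ℂ)).re| := by rw [h2]
        _ ≤ ‖G (x:ℂ) + et * Complex.cos (x:ℂ)‖ := Complex.abs_re_le_norm _
        _ ≤ c * et := h
    have hGmin : (G (θmin:ℂ)).re ≤ -(et * (Real.sqrt 3/2)) + c*et := by
      have h := (abs_le.mp (hGval θmin)).2
      have h2 := hcos_ge6 θmin habs6
      nlinarith [mul_le_mul_of_nonneg_left h2 het.le]
    have hGs : et * (Real.sqrt 3/2) - c*et ≤ (G (θs:ℂ)).re := by
      have h := (abs_le.mp (hGval θs)).1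
      have h3 := hcos_ge6 (θs - Real.pi) habsS
      have h4 := Real.cos_sub_pi θs
      have hcx : Real.cos θs ≤ -(Real.sqrt 3/2) := by linarith
      nlinarith [mul_le_mul_of_nonneg_left hcx het.le]
    have hsep : et/4 ≤ (G (θs:ℂ)).re - (G (θmin:ℂ)).re := by
      nlinarith [mul_le_mul_of_nonneg_right hc14 het.le,
        mul_lt_mul_of_pos_right hsq3 het]
    have huniq_min : ∀ x : ℝ, -(Real.pi/6) < x → x < Real.pi/6 → φ x = 0 → x = θmin := by
      intro x h1 h2 h0
      refine hmono.injOn (mem_Icc.mpr ⟨h1.le, h2.le⟩)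
        (mem_Icc.mpr ⟨by linarith [hθminIoo.1], hθminIoo.2.le⟩) ?_
      rw [h0, hθmin0]
    have huniq_s : ∀ x : ℝ, 5*Real.pi/6 ≤ x → x ≤ 7*Real.pi/6 → φ x = 0 → x = θs := by
      intro x h1 h2 h0
      refine hanti.injOn (mem_Icc.mpr ⟨h1, h2⟩)
        (mem_Icc.mpr ⟨hθsIoo.1.le, hθsIoo.2.le⟩) ?_
      rw [h0, hθs0]
    have hφzero : ∀ x : ℝ, deriv G (x:ℂ) = 0 → φ x = 0 := by
      intro x hx
      rw [hφdef]
      simp [hx]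
    have huniq : ∀ x : ℝ, x ∈ Set.Ioc (-Real.pi) Real.pi → deriv G (x:ℂ) = 0 →
        x = θmin ∨ (x = θs ∨ x + 2*Real.pi = θs) := by
      intro x hx hdx
      have h0 : φ x = 0 := hφzero x hdx
      have hs14 : |Real.sin x| ≤ 1/4 := hzsin x hdx
      rcases lt_or_ge x (-(5*Real.pi/6)) with hC | h1
      · right; right
        have h3 : deriv G (((x + 2*Real.pi : ℝ)):ℂ) = 0 := by
          have hc2 : (((x + 2*Real.pi : ℝ)):ℂ) = (x:ℂ) + 2*(Real.pi:ℂ) := by push_cast; ring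
          rw [hc2, hper1]
          exact hdx
        exact huniq_s (x + 2*Real.pi) (by linarith [hx.1]) (by linarith) (hφzero _ h3)
      · rcases lt_or_ge (5*Real.pi/6) x with hB | h2
        · right; left
          exact huniq_s x hB.le (by linarith [hx.2]) h0
        · left
          have hxlt : x < Real.pi/6 := by
            by_contra hcon
            push_neg at hcon
            have h5 := hsin_ge x hcon h2
            have h6 := le_abs_self (Real.sin x)
            linarith
          have hxgt : -(Real.pi/6) < x := by
            by_contra hcon
            push_neg at hcon
            have h5 : (1:ℝ)/2 ≤ Real.sin (-x) := hsin_ge (-x) (by linarith) (by linarith)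
            rw [Real.sin_neg] at h5
            have h6 := neg_abs_le (Real.sin x)
            linarith
          exact huniq_min x hxgt hxlt h0
    have hθminIoc : θmin ∈ Set.Ioc (-Real.pi) Real.pi :=
      Set.mem_Ioc.mpr ⟨by linarith [hθminIoo.1], by linarith [hθminIoo.2]⟩
    rcases le_or_gt θs Real.pi with hle | hgt
    · refine ⟨θmin, θs, hθminIoc, Set.mem_Ioc.mpr ⟨by linarith [hθsIoo.1], hle⟩,
        ?_, hθminC, hθsC, hθminψ, hθsψ, ?_, ?_⟩
      · have h : θmin < θs := by linarith [hθminIoo.2, hθsIoo.1]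
        exact h.ne
      · calc et/4 ≤ (G (θs:ℂ) - G (θmin:ℂ)).re := by rw [Complex.sub_re]; linarith [hsep]
          _ ≤ ‖G (θs:ℂ) - G (θmin:ℂ)‖ := Complex.re_le_norm _
      · intro x hx hdx
        rcases huniq x hx hdx with h | h | h
        · exact Or.inl h
        · exact Or.inr h
        · exfalso
          have := hx.1
          linarith
    · have hcast2 : ((θs - 2*Real.pi : ℝ) : ℂ) + 2*(Real.pi:ℂ) = (θs:ℂ) := by push_cast; ring
      have hD : deriv G (((θs - 2*Real.pi : ℝ)):ℂ) = 0 := by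
        rw [← hper1 (((θs - 2*Real.pi : ℝ)):ℂ), hcast2]
        exact hθsC
      have hψmax : (iteratedDeriv 2 G (((θs - 2*Real.pi : ℝ)):ℂ)).re < 0 := by
        rw [← hper2 (((θs - 2*Real.pi : ℝ)):ℂ), hcast2]
        exact hθsψ
      have hGmax : G (((θs - 2*Real.pi : ℝ)):ℂ) = G (θs:ℂ) := by
        rw [← hGper (((θs - 2*Real.pi : ℝ)):ℂ)]
        rw [show ((θs - 2*Real.pi : ℝ) : ℂ) + 2 * (Real.pi:ℂ) = (θs:ℂ) from hcast2]
      refine ⟨θmin, θs - 2*Real.pi, hθminIoc,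
        Set.mem_Ioc.mpr ⟨by linarith, by linarith [hθsIoo.2]⟩, ?_, hθminC, hD, hθminψ, hψmax,
        ?_, ?_⟩
      · have h : θs - 2*Real.pi < θmin := by linarith [hθsIoo.2, hθminIoo.1]
        exact h.ne'
      · rw [hGmax]
        calc et/4 ≤ (G (θs:ℂ) - G (θmin:ℂ)).re := by rw [Complex.sub_re]; linarith [hsep]
          _ ≤ ‖G (θs:ℂ) - G (θmin:ℂ)‖ := Complex.re_le_norm _
      · intro x hx hdx
        rcases huniq x hx hdx with h | h | h
        · exact Or.inl h
        · exfalso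
          have := hx.2
          linarith
        · right
          linarith
end
end
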